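/- Let W : X → P(Y) with X, Y finite, ρ : X → ℝ≥0^ℓ, λ ∈ ℝ≥0^ℓ, α ∈ (0,1), and P a probability mass function on X. Define the Rényi–Gallager information I_α^{G,λ}(P;W) := inf_Q D_α( P ∘ (W·e^{((1−α)/α)λ·ρ}) ‖ P ⊗ Q ), where (P ∘ (W e^{((1−α)/α)λ·ρ}))(x,y) := P(x) W(x)(y) e^{((1−α)/α) λ·ρ(x)} and (P⊗Q)(x,y) := P(x)Q(y). Then I_α^{G,λ}(P;W) ≤ I_α^λ(P;W) := I_α(P;W) − λ·Σ_x P(x)ρ(x); i.e., the R-G information is at most the A-L information for α ∈ (0,1). -/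

import Mathlib

open scoped BigOperators

/-- A probability mass function on a finite type. -/
def IsPMF {Y : Type*} [Fintype Y] (Q : Y → ℝ) : Prop :=
  (∀ y, 0 ≤ Q y) ∧ ∑ y, Q y = 1

/-- The power sum appearing in the Rényi divergence; since `(0:ℝ) ^ (1-α) = 0` for `1-α > 0`,
the sum automatically restricts to `y` with `Q y > 0`. -/
noncomputable def rSum {Y : Type*} [Fintype Y] (α : ℝ) (W Q : Y → ℝ) : ℝ :=
  ∑ y, W y ^ α * Q y ^ (1 - α)

/-- Order-`α` Rényi divergence (for `α ∈ (0,1)`), valued in `EReal`, with the convention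
that it is `⊤` when the power sum vanishes. -/
noncomputable def rDiv {Y : Type*} [Fintype Y] (α : ℝ) (W Q : Y → ℝ) : EReal :=
  if rSum α W Q = 0 then ⊤
  else (((1 / (α - 1)) * Real.log (rSum α W Q) : ℝ) : EReal)

/-- Kullback–Leibler divergence, valued in `EReal`, `⊤` unless `W ≪ Q`. -/
noncomputable def kDiv {Y : Type*} [Fintype Y] (W Q : Y → ℝ) : EReal :=
  if ∀ y, Q y = 0 → W y = 0 then
    (((∑ y, if W y = 0 then 0 else W y * Real.log (W y / Q y)) : ℝ) : EReal)
  else ⊤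

/-- Order-`α` divergence for `α ∈ (0,1]`: Rényi for `α ≠ 1`, KL for `α = 1`. -/
noncomputable def dA {Y : Type*} [Fintype Y] (α : ℝ) (W Q : Y → ℝ) : EReal :=
  if α = 1 then kDiv W Q else rDiv α W Q

/-- Conditional divergence `D_α(W‖Q|P) = ∑_x P(x) D_α(W(x)‖Q)`. -/
noncomputable def cDiv {X Y : Type*} [Fintype X] [Fintype Y]
    (α : ℝ) (W : X → Y → ℝ) (Q : Y → ℝ) (P : X → ℝ) : EReal :=
  ∑ x, (P x : EReal) * dA α (W x) Q

/-- Augustin information `I_α(P;W) = inf_Q D_α(W‖Q|P)`. -/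
noncomputable def aInfo {X Y : Type*} [Fintype X] [Fintype Y]
    (α : ℝ) (P : X → ℝ) (W : X → Y → ℝ) : EReal :=
  ⨅ Q ∈ {Q : Y → ℝ | IsPMF Q}, cDiv α W Q P

/- Auxiliary lemmas -/

lemma ereal_coe_sum {ι : Type*} (s : Finset ι) (f : ι → ℝ) :
    ((∑ i ∈ s, f i : ℝ) : EReal) = ∑ i ∈ s, (f i : EReal) :=
  map_sum (⟨⟨((↑) : ℝ → EReal), EReal.coe_zero⟩, EReal.coe_add⟩ : ℝ →+ EReal) f s

lemma ereal_sum_ne_bot {ι : Type*} (s : Finset ι) (f : ι → EReal)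
    (h : ∀ i ∈ s, f i ≠ ⊥) : ∑ i ∈ s, f i ≠ ⊥ := by
  classical
  induction s using Finset.induction with
  | empty => simp
  | insert _ _ hi ih =>
    rw [Finset.sum_insert hi]
    rw [ne_eq, EReal.add_eq_bot_iff]
    push_neg
    exact ⟨h _ (Finset.mem_insert_self _ _),
      ih fun i hi' => h i (Finset.mem_insert_of_mem hi')⟩

/-- the Rényi–Gallager information is at most the Augustin–Legendre
information for `α ∈ (0,1)`. -/
theorem rg_le_al {X Y : Type*} [Fintype X] [Fintype Y]
    [Nonempty X] [Nonempty Y] {l : ℕ} (hl : 0 < l)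
    (α : ℝ) (hα : α ∈ Set.Ioo (0 : ℝ) 1)
    (W : X → Y → ℝ) (hW : ∀ x, IsPMF (W x))
    (ρ : X → Fin l → ℝ) (hρ : ∀ x i, 0 ≤ ρ x i)
    (lam : Fin l → ℝ) (hlam : ∀ i, 0 ≤ lam i)
    (P : X → ℝ) (hP : IsPMF P) :
    (⨅ Q ∈ {Q : Y → ℝ | IsPMF Q},
        rDiv α
          (fun p : X × Y =>
            P p.1 * W p.1 p.2 * Real.exp ((1 - α) / α * ∑ i, lam i * ρ p.1 i))
          (fun p : X × Y => P p.1 * Q p.2)) ≤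
      aInfo α P W - (((∑ i, lam i * ∑ x, P x * ρ x i) : ℝ) : EReal) := by
  classical
  obtain ⟨hα0, hα1⟩ := hα
  have hαne : α ≠ 1 := ne_of_lt hα1
  set c : ℝ := ∑ i, lam i * ∑ x, P x * ρ x i with hcdef
  set L : X → ℝ := fun x => ∑ i, lam i * ρ x i with hLdef
  have hc : c = ∑ x, P x * L x := by
    rw [hcdef]
    simp_rw [Finset.mul_sum]
    rw [Finset.sum_comm]
    refine Finset.sum_congr rfl fun x _ => ?_
    simp_rw [hLdef, Finset.mul_sum]
    exact Finset.sum_congr rfl fun i _ => by ring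
  rw [EReal.le_sub_iff_add_le (Or.inl (EReal.coe_ne_bot c)) (Or.inl (EReal.coe_ne_top c))]
  rw [aInfo]
  refine le_iInf fun Q => le_iInf fun hQ => ?_
  have hQ' : IsPMF Q := hQ
  -- core inequality
  suffices h : rDiv α
      (fun p : X × Y =>
        P p.1 * W p.1 p.2 * Real.exp ((1 - α) / α * ∑ i, lam i * ρ p.1 i))
      (fun p : X × Y => P p.1 * Q p.2) ≤ cDiv α W Q P - (c : EReal) by
    calc (⨅ Q ∈ {Q : Y → ℝ | IsPMF Q},
        rDiv α
          (fun p : X × Y =>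
            P p.1 * W p.1 p.2 * Real.exp ((1 - α) / α * ∑ i, lam i * ρ p.1 i))
          (fun p : X × Y => P p.1 * Q p.2)) + (c : EReal)
        ≤ rDiv α
          (fun p : X × Y =>
            P p.1 * W p.1 p.2 * Real.exp ((1 - α) / α * ∑ i, lam i * ρ p.1 i))
          (fun p : X × Y => P p.1 * Q p.2) + (c : EReal) :=
          add_le_add_left (iInf₂_le Q hQ) _
      _ ≤ (cDiv α W Q P - (c : EReal)) + (c : EReal) := add_le_add_left h _
      _ = cDiv α W Q P := EReal.sub_add_cancel
  set S : X → ℝ := fun x => rSum α (W x) Q with hSdef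
  set E : X → ℝ := fun x => Real.exp ((1 - α) * L x) with hEdef
  have hSnn : ∀ x, 0 ≤ S x := fun x =>
    Finset.sum_nonneg fun y _ => mul_nonneg (Real.rpow_nonneg ((hW x).1 y) _)
      (Real.rpow_nonneg (hQ'.1 y) _)
  -- joint power sum
  have key : ∀ x y, (P x * W x y * Real.exp ((1 - α) / α * L x)) ^ α *
      (P x * Q y) ^ (1 - α) = P x * (E x * (W x y ^ α * Q y ^ (1 - α))) := by
    intro x y
    rw [Real.mul_rpow (mul_nonneg (hP.1 x) ((hW x).1 y)) (Real.exp_pos _).le,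
        Real.mul_rpow (hP.1 x) ((hW x).1 y),
        Real.mul_rpow (hP.1 x) (hQ'.1 y),
        ← Real.exp_mul]
    have h1 : (1 - α) / α * L x * α = (1 - α) * L x := by field_simp
    have h2 : P x ^ α * P x ^ (1 - α) = P x := by
      rw [← Real.rpow_add' (hP.1 x) (by norm_num : α + (1 - α) ≠ 0)]
      norm_num
    rw [h1]
    calc P x ^ α * W x y ^ α * Real.exp ((1 - α) * L x) * (P x ^ (1 - α) * Q y ^ (1 - α))
        = (P x ^ α * P x ^ (1 - α)) * (Real.exp ((1 - α) * L x) * (W x y ^ α * Q y ^ (1 - α))) := by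
          ring
      _ = P x * (Real.exp ((1 - α) * L x) * (W x y ^ α * Q y ^ (1 - α))) := by rw [h2]
      _ = P x * (E x * (W x y ^ α * Q y ^ (1 - α))) := by rw [hEdef]
  have hT : rSum α
      (fun p : X × Y =>
        P p.1 * W p.1 p.2 * Real.exp ((1 - α) / α * ∑ i, lam i * ρ p.1 i))
      (fun p : X × Y => P p.1 * Q p.2) = ∑ x, P x * (E x * S x) := by
    rw [rSum, Fintype.sum_prod_type]
    refine Finset.sum_congr rfl fun x _ => ?_
    simp only
    rw [show (∑ i, lam i * ρ x i) = L x from rfl]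
    simp_rw [key x]
    rw [← Finset.mul_sum, ← Finset.mul_sum]
    rfl
  by_cases hS : ∃ x, P x ≠ 0 ∧ S x = 0
  · -- RHS is ⊤
    obtain ⟨x₀, hx₀, hSx₀⟩ := hS
    have hterm : (P x₀ : EReal) * dA α (W x₀) Q = ⊤ := by
      rw [dA, if_neg hαne, rDiv, if_pos hSx₀]
      exact EReal.coe_mul_top_of_pos (lt_of_le_of_ne (hP.1 x₀) (Ne.symm hx₀))
    have hne : ∀ x : X, (P x : EReal) * dA α (W x) Q ≠ ⊥ := by
      intro x
      rw [dA, if_neg hαne, rDiv]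
      split
      · by_cases h : P x = 0
        · simp [h]
        · rw [EReal.coe_mul_top_of_pos (lt_of_le_of_ne (hP.1 x) (Ne.symm h))]
          simp
      · rw [← EReal.coe_mul]; exact EReal.coe_ne_bot _
    have hcd : cDiv α W Q P = ⊤ := by
      rw [cDiv, ← Finset.add_sum_erase _ _ (Finset.mem_univ x₀), hterm]
      exact EReal.top_add_of_ne_bot
        (ereal_sum_ne_bot _ _ fun i _ => hne i)
    rw [hcd, EReal.top_sub_coe]
    exact le_top
  · push_neg at hS
    have hSpos : ∀ x, P x ≠ 0 → 0 < S x := fun x hx =>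
      lt_of_le_of_ne (hSnn x) (Ne.symm (hS x hx))
    set z : X → ℝ := fun x => if P x = 0 then 1 else E x * S x with hzdef
    have hz : ∀ x, 0 < z x := by
      intro x
      rw [hzdef]
      by_cases h : P x = 0
      · simp [h]
      · simp only [h, if_false]
        exact mul_pos (Real.exp_pos _) (hSpos x h)
    have hTz : (∑ x, P x * (E x * S x)) = ∑ x, P x * z x := by
      refine Finset.sum_congr rfl fun x _ => ?_
      by_cases h : P x = 0
      · simp [h]
      · simp [hzdef, h]
    obtain ⟨x₀, hx₀⟩ : ∃ x, P x ≠ 0 := by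
      by_contra hcon
      push_neg at hcon
      have := hP.2
      rw [Finset.sum_eq_zero fun x _ => hcon x] at this
      norm_num at this
    have hT0 : 0 < ∑ x, P x * (E x * S x) := by
      rw [hTz]
      have h1 : P x₀ * z x₀ ≤ ∑ x, P x * z x :=
        Finset.single_le_sum (fun x _ => mul_nonneg (hP.1 x) (hz x).le)
          (Finset.mem_univ x₀)
      have h2 : 0 < P x₀ * z x₀ :=
        mul_pos (lt_of_le_of_ne (hP.1 x₀) (Ne.symm hx₀)) (hz x₀)
      linarith
    -- Jensen
    have hgm : ∏ x, z x ^ P x ≤ ∑ x, P x * z x :=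
      Real.geom_mean_le_arith_mean_weighted Finset.univ P z (fun x _ => hP.1 x)
        hP.2 (fun x _ => (hz x).le)
    have hprod_pos : 0 < ∏ x, z x ^ P x :=
      Finset.prod_pos fun x _ => Real.rpow_pos_of_pos (hz x) _
    have hlog : ∑ x, P x * Real.log (z x) ≤ Real.log (∑ x, P x * (E x * S x)) := by
      have h1 : Real.log (∏ x, z x ^ P x) = ∑ x, P x * Real.log (z x) := by
        rw [Real.log_prod fun x _ => (Real.rpow_pos_of_pos (hz x) _).ne']
        exact Finset.sum_congr rfl fun x _ => Real.log_rpow (hz x) _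
      rw [← h1, hTz]
      exact Real.log_le_log hprod_pos hgm
    have hα1' : α - 1 ≠ 0 := by intro h; apply hαne; linarith
    have hneg : 1 / (α - 1) < 0 := by
      apply div_neg_of_pos_of_neg one_pos
      linarith
    have hmain : 1 / (α - 1) * Real.log (∑ x, P x * (E x * S x)) ≤
        (∑ x, P x * (1 / (α - 1) * Real.log (S x))) - c := by
      have h1 : 1 / (α - 1) * Real.log (∑ x, P x * (E x * S x)) ≤
          1 / (α - 1) * ∑ x, P x * Real.log (z x) :=
        mul_le_mul_of_nonpos_left hlog hneg.le
      refine h1.trans (le_of_eq ?_)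
      rw [hc, Finset.mul_sum, ← Finset.sum_sub_distrib]
      refine Finset.sum_congr rfl fun x _ => ?_
      by_cases h : P x = 0
      · simp [h]
      · have hzx : Real.log (z x) = (1 - α) * L x + Real.log (S x) := by
          rw [hzdef]
          simp only [h, if_false]
          rw [Real.log_mul (Real.exp_ne_zero _) (hS x h), Real.log_exp]
        rw [hzx]
        field_simp
        ring
    -- convert everything to EReal
    have hcd : cDiv α W Q P =
        (((∑ x, P x * (1 / (α - 1) * Real.log (S x))) : ℝ) : EReal) := by
      rw [cDiv, ereal_coe_sum]
      refine Finset.sum_congr rfl fun x _ => ?_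
      by_cases h : P x = 0
      · simp [h]
      · rw [dA, if_neg hαne, rDiv, if_neg (hS x h), ← EReal.coe_mul]
    rw [hcd, rDiv, hT, if_neg hT0.ne', ← EReal.coe_sub]
    exact EReal.coe_le_coe_iff.mpr hmain
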